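/- Suppose L_u, L_v, L_{uv}, L_{vu} > 0, τ ≥ 1, and η_u ≤ 1/(√6 · τ · L_u · max{1, (L_{vu}L_{uv})/(L_u L_v)}), η_v ≤ 1/(√6 · τ · L_v · max{1, (L_{vu}L_{uv})/(L_u L_v)}). Define A = L_u² η_u + L_{vu}² η_v and B = L_v² η_v + L_{uv}² η_u. Then 3τ²η_v²L_v²B + 3τ²η_u²L_{uv}²A ≤ B. -/
import Mathlib


theorem lemma7_second (Lu Lv Luv Lvu τ ηu ηv : ℝ)
    (hLu : 0 < Lu) (hLv : 0 < Lv) (hLuv : 0 < Luv) (hLvu : 0 < Lvu)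
    (hτ : 1 ≤ τ) (hηu : 0 < ηu) (hηv : 0 < ηv)
    (hu : ηu ≤ 1 / (Real.sqrt 6 * τ * Lu * max 1 (Lvu * Luv / (Lu * Lv))))
    (hv : ηv ≤ 1 / (Real.sqrt 6 * τ * Lv * max 1 (Lvu * Luv / (Lu * Lv)))) :
    3 * τ ^ 2 * ηv ^ 2 * Lv ^ 2 * (Lv ^ 2 * ηv + Luv ^ 2 * ηu)
      + 3 * τ ^ 2 * ηu ^ 2 * Luv ^ 2 * (Lu ^ 2 * ηu + Lvu ^ 2 * ηv)
      ≤ Lv ^ 2 * ηv + Luv ^ 2 * ηu := by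
  set M := max 1 (Lvu * Luv / (Lu * Lv)) with hMdef
  have hs : (0:ℝ) < Real.sqrt 6 := Real.sqrt_pos.mpr (by norm_num)
  have hs2 : (Real.sqrt 6) ^ 2 = 6 := Real.sq_sqrt (by norm_num)
  have hτ0 : (0:ℝ) < τ := lt_of_lt_of_le one_pos hτ
  have hM1 : (1:ℝ) ≤ M := le_max_left _ _
  have hM2 : Lvu * Luv / (Lu * Lv) ≤ M := le_max_right _ _
  have hM0 : (0:ℝ) < M := lt_of_lt_of_le one_pos hM1
  have hM2' : Lvu * Luv ≤ M * (Lu * Lv) := by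
    rw [div_le_iff₀ (by positivity)] at hM2; linarith
  have hdu : (0:ℝ) < Real.sqrt 6 * τ * Lu * M := by positivity
  have hdv : (0:ℝ) < Real.sqrt 6 * τ * Lv * M := by positivity
  have hu' : ηu * (Real.sqrt 6 * τ * Lu * M) ≤ 1 := by
    rw [← le_div_iff₀ hdu]; exact hu
  have hv' : ηv * (Real.sqrt 6 * τ * Lv * M) ≤ 1 := by
    rw [← le_div_iff₀ hdv]; exact hv
  -- linear bounds
  have hau : Real.sqrt 6 * τ * Lu * ηu ≤ 1 := by
    have h := mul_le_mul_of_nonneg_left hM1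
      (show (0:ℝ) ≤ ηu * (Real.sqrt 6 * τ * Lu) by positivity)
    nlinarith [hu']
  have hav : Real.sqrt 6 * τ * Lv * ηv ≤ 1 := by
    have h := mul_le_mul_of_nonneg_left hM1
      (show (0:ℝ) ≤ ηv * (Real.sqrt 6 * τ * Lv) by positivity)
    nlinarith [hv']
  have hac : Real.sqrt 6 * τ * (Lvu * Luv) * ηu ≤ Lv := by
    have h := mul_le_mul_of_nonneg_left hM2'
      (show (0:ℝ) ≤ ηu * (Real.sqrt 6 * τ) by positivity)
    -- h : ηu*(√6τ)*(LvuLuv) ≤ ηu*(√6τ)*(M*(Lu*Lv))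
    have h2 := mul_le_mul_of_nonneg_right hu' hLv.le
    nlinarith [h, h2]
  -- squared bounds
  have h1 : 6 * τ ^ 2 * Lu ^ 2 * ηu ^ 2 ≤ 1 := by
    have ha2 : (Real.sqrt 6 * τ * Lu * ηu) ^ 2 ≤ 1 := by
      have := pow_le_pow_left₀ (show (0:ℝ) ≤ Real.sqrt 6 * τ * Lu * ηu by positivity) hau 2
      simpa using this
    have e : (Real.sqrt 6 * τ * Lu * ηu) ^ 2 = 6 * τ ^ 2 * Lu ^ 2 * ηu ^ 2 := by
      rw [mul_pow, mul_pow, mul_pow, hs2]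
    linarith [e ▸ ha2]
  have h2 : 6 * τ ^ 2 * Lv ^ 2 * ηv ^ 2 ≤ 1 := by
    have ha2 : (Real.sqrt 6 * τ * Lv * ηv) ^ 2 ≤ 1 := by
      have := pow_le_pow_left₀ (show (0:ℝ) ≤ Real.sqrt 6 * τ * Lv * ηv by positivity) hav 2
      simpa using this
    have e : (Real.sqrt 6 * τ * Lv * ηv) ^ 2 = 6 * τ ^ 2 * Lv ^ 2 * ηv ^ 2 := by
      rw [mul_pow, mul_pow, mul_pow, hs2]
    linarith [e ▸ ha2]
  have h3 : 6 * τ ^ 2 * Lvu ^ 2 * Luv ^ 2 * ηu ^ 2 ≤ Lv ^ 2 := by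
    have ha2 : (Real.sqrt 6 * τ * (Lvu * Luv) * ηu) ^ 2 ≤ Lv ^ 2 :=
      pow_le_pow_left₀ (by positivity) hac 2
    have e : (Real.sqrt 6 * τ * (Lvu * Luv) * ηu) ^ 2
        = 6 * τ ^ 2 * Lvu ^ 2 * Luv ^ 2 * ηu ^ 2 := by
      rw [mul_pow, mul_pow, mul_pow, hs2]; ring
    linarith [e ▸ ha2]
  -- combine
  have hB : (0:ℝ) ≤ Lv ^ 2 * ηv + Luv ^ 2 * ηu := by positivity
  have t1 := mul_le_of_le_one_left hB h2
  have t2 := mul_le_of_le_one_left (show (0:ℝ) ≤ Luv ^ 2 * ηu by positivity) h1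
  have t3 := mul_le_mul_of_nonneg_right h3 hηv.le
  nlinarith [t1, t2, t3]
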